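/- Let E be a finite-dimensional real normed vector space, L_d : E × E → ℝ differentiable, and ξ : E → E a continuous linear endomorphism such that L_d(exp(tξ)(q₀), exp(tξ)(q₁)) = L_d(q₀, q₁) for all t ∈ ℝ and all q₀, q₁ ∈ E. If q_{k-1}, q_k, q_{k+1} ∈ E satisfy the discrete Euler–Lagrange equation D₁L_d(q_k, q_{k+1}) + D₂L_d(q_{k-1}, q_k) = 0, then the discrete momentum J(q₀, q₁) := D₂L_d(q₀, q₁)(ξ(q₁)) is preserved along the discrete trajectory: J(q_{k-1}, q_k) = J(q_k, q_{k+1}). -/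

import Mathlib

open NormedSpace

/-- Infinitesimal invariance: differentiating the invariance identity at t = 0. -/
lemma infinitesimal_invariance
    {E : Type*} [NormedAddCommGroup E] [NormedSpace ℝ E] [FiniteDimensional ℝ E]
    (L : E × E → ℝ) (hL : Differentiable ℝ L)
    (ξ : E →L[ℝ] E)
    (hinv : ∀ (t : ℝ) (q₀ q₁ : E),
      L (NormedSpace.exp (t • ξ) q₀, NormedSpace.exp (t • ξ) q₁) = L (q₀, q₁))
    (q₀ q₁ : E) :
    fderiv ℝ (fun x => L (x, q₁)) q₀ (ξ q₀)
      + fderiv ℝ (fun y => L (q₀, y)) q₁ (ξ q₁) = 0 := by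
  -- derivative of t ↦ exp(tξ) q  at t = 0 is ξ q
  have hexp : ∀ q : E, HasDerivAt (fun t : ℝ => NormedSpace.exp (t • ξ) q) (ξ q) 0 := by
    intro q
    have h1 : HasDerivAt (fun t : ℝ => NormedSpace.exp (t • ξ))
        (NormedSpace.exp ((0:ℝ) • ξ) * ξ) 0 := hasDerivAt_exp_smul_const ξ 0
    have h2 := h1.clm_apply (hasDerivAt_const (0:ℝ) q)
    simpa [zero_smul, NormedSpace.exp_zero] using h2
  have hf : HasDerivAt (fun t : ℝ =>
      (NormedSpace.exp (t • ξ) q₀, NormedSpace.exp (t • ξ) q₁)) (ξ q₀, ξ q₁) 0 :=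
    (hexp q₀).prodMk (hexp q₁)
  have hLd : HasFDerivAt L (fderiv ℝ L (q₀, q₁)) (q₀, q₁) := (hL (q₀, q₁)).hasFDerivAt
  have hLd' : HasFDerivAt L (fderiv ℝ L (q₀, q₁))
      ((NormedSpace.exp ((0:ℝ) • ξ)) q₀, (NormedSpace.exp ((0:ℝ) • ξ)) q₁) := by
    simpa [zero_smul, NormedSpace.exp_zero] using hLd
  have hcomp : HasDerivAt (fun t : ℝ =>
      L (NormedSpace.exp (t • ξ) q₀, NormedSpace.exp (t • ξ) q₁))
      (fderiv ℝ L (q₀, q₁) (ξ q₀, ξ q₁)) 0 := hLd'.comp_hasDerivAt 0 hf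
  have hconst : HasDerivAt (fun t : ℝ =>
      L (NormedSpace.exp (t • ξ) q₀, NormedSpace.exp (t • ξ) q₁)) 0 0 := by
    have : (fun t : ℝ => L (NormedSpace.exp (t • ξ) q₀, NormedSpace.exp (t • ξ) q₁))
        = fun _ => L (q₀, q₁) := funext fun t => hinv t q₀ q₁
    rw [this]; exact hasDerivAt_const _ _
  have hzero : fderiv ℝ L (q₀, q₁) (ξ q₀, ξ q₁) = 0 := hcomp.unique hconst
  -- partial derivatives via composition
  have h1 : fderiv ℝ (fun x => L (x, q₁)) q₀ (ξ q₀) = fderiv ℝ L (q₀, q₁) (ξ q₀, 0) := by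
    have := (hLd.comp (f := fun e => (e, q₁)) q₀ (hasFDerivAt_prodMk_left (𝕜 := ℝ) q₀ q₁)).fderiv
    rw [show (fun x => L (x, q₁)) = (L ∘ fun e => (e, q₁)) from rfl, this]; rfl
  have h2 : fderiv ℝ (fun y => L (q₀, y)) q₁ (ξ q₁) = fderiv ℝ L (q₀, q₁) (0, ξ q₁) := by
    have := (hLd.comp (f := fun y => (q₀, y)) q₁ (hasFDerivAt_prodMk_right (𝕜 := ℝ) q₀ q₁)).fderiv
    rw [show (fun y => L (q₀, y)) = (L ∘ Prod.mk q₀) from rfl, this]; rfl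
  rw [h1, h2, ← map_add]
  simpa using hzero

theorem discrete_noether_momentum_preservation
    {E : Type*} [NormedAddCommGroup E] [NormedSpace ℝ E] [FiniteDimensional ℝ E]
    (L : E × E → ℝ) (hL : Differentiable ℝ L)
    (ξ : E →L[ℝ] E)
    (hinv : ∀ (t : ℝ) (q₀ q₁ : E),
      L (NormedSpace.exp (t • ξ) q₀, NormedSpace.exp (t • ξ) q₁) = L (q₀, q₁))
    (qkm qk qkp : E)
    (hDEL : fderiv ℝ (fun x => L (x, qkp)) qk
        + fderiv ℝ (fun y => L (qkm, y)) qk = 0) :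
    fderiv ℝ (fun y => L (qkm, y)) qk (ξ qk)
      = fderiv ℝ (fun y => L (qk, y)) qkp (ξ qkp) := by
  have h := infinitesimal_invariance L hL ξ hinv qk qkp
  have hD := congrArg (fun f => f (ξ qk)) hDEL
  simp only [ContinuousLinearMap.add_apply, ContinuousLinearMap.zero_apply] at hD
  linarith
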